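/- Let k be an algebraically closed field of characteristic 0 and let A be a finitely generated commutative Hopf algebra over k (the coordinate ring of a linear algebraic group G over k), with comultiplication Δ: A → A ⊗_k A. Let L be the k-subspace of left-invariant derivations, L = { η ∈ Der_k(A) | Δ ∘ η = (id_A ⊗ η) ∘ Δ }. Then the A-module map A ⊗_k L → Der_k(A) sending f ⊗ η to f·η is bijective; that is, Der_k(A) is a free A-module generated by the left-invariant vector fields. -/

import Mathlib

open TensorProduct

/-- The space of left-invariant derivations (left-invariant vector fields) on a commutative
Hopf algebra `A`: derivations `η` with `Δ ∘ η = (id ⊗ η) ∘ Δ`. -/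
def leftInvariantDerivations (k A : Type*) [CommRing k] [CommRing A] [HopfAlgebra k A] :
    Submodule k (Derivation k A A) where
  carrier := {η | (Coalgebra.comul (R := k) (A := A)) ∘ₗ η.toLinearMap =
    (TensorProduct.map LinearMap.id η.toLinearMap) ∘ₗ Coalgebra.comul}
  add_mem' := by
    intro a b ha hb
    simp only [Set.mem_setOf_eq] at ha hb ⊢
    have hab : (a + b).toLinearMap = a.toLinearMap + b.toLinearMap := rfl
    rw [hab, TensorProduct.map_add_right, LinearMap.comp_add, LinearMap.add_comp, ha, hb]
  zero_mem' := by
    simp only [Set.mem_setOf_eq]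
    have h0 : (0 : Derivation k A A).toLinearMap = 0 := rfl
    rw [h0, TensorProduct.map_zero_right, LinearMap.comp_zero, LinearMap.zero_comp]
  smul_mem' := by
    intro c a ha
    simp only [Set.mem_setOf_eq] at ha ⊢
    have hca : (c • a).toLinearMap = c • a.toLinearMap := rfl
    rw [hca, TensorProduct.map_smul_right, LinearMap.comp_smul, LinearMap.smul_comp, ha]

/-- The canonical map `A ⊗ₖ L → Der_k(A)`, `f ⊗ η ↦ f·η`, where `L` is the space of
left-invariant derivations. -/
noncomputable def leftInvariantEval (k A : Type*) [CommRing k] [CommRing A]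
    [HopfAlgebra k A] :
    A ⊗[k] (leftInvariantDerivations k A) →ₗ[k] Derivation k A A :=
  TensorProduct.lift
    { toFun := fun f =>
        { toFun := fun η => f • (η : Derivation k A A)
          map_add' := fun x y => by simp [smul_add]
          map_smul' := fun c x => by simp [smul_comm c f] }
      map_add' := fun f g => by
        ext x
        simp [add_smul]
      map_smul' := fun c f => by
        ext x
        simp [smul_assoc] }


namespace LIP

open Coalgebra HopfAlgebra

variable {k A : Type*} [CommRing k] [CommRing A] [HopfAlgebra k A]


/-- Convolution of two linear endomorphisms of a Hopf algebra. -/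
noncomputable def conv (f g : A →ₗ[k] A) : A →ₗ[k] A :=
  LinearMap.mul' k A ∘ₗ TensorProduct.map f g ∘ₗ Coalgebra.comul

lemma conv_apply (f g : A →ₗ[k] A) {a : A} {ι : Type*} (r : Coalgebra.Repr k a ι) :
    conv f g a = ∑ i ∈ r.index, f (r.left i) * g (r.right i) := by
  simp only [conv, LinearMap.comp_apply, ← r.eq, map_sum, TensorProduct.map_tmul,
    LinearMap.mul'_apply]

lemma repr_sum_counit_smul {a : A} {ι : Type*} (r : Coalgebra.Repr k a ι) :
    ∑ i ∈ r.index, Coalgebra.counit (R := k) (r.left i) • r.right i = a := by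
  have h := congrArg (TensorProduct.lid k A) (Coalgebra.sum_counit_tmul_eq r)
  simp only [map_sum, TensorProduct.lid_tmul, one_smul] at h
  exact h

lemma repr_sum_smul_counit {a : A} {ι : Type*} (r : Coalgebra.Repr k a ι) :
    ∑ i ∈ r.index, Coalgebra.counit (R := k) (r.right i) • r.left i = a := by
  have h := congrArg (TensorProduct.rid k A) (Coalgebra.sum_tmul_counit_eq r)
  simp only [map_sum, TensorProduct.rid_tmul, one_smul] at h
  exact h

lemma conv_counit_left (f : A →ₗ[k] A) :
    conv ((Algebra.linearMap k A) ∘ₗ Coalgebra.counit) f = f := by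
  ext a
  rw [conv_apply _ _ (ℛ k a)]
  have : ∀ i ∈ (ℛ k a).index,
      (Algebra.linearMap k A ∘ₗ Coalgebra.counit) ((ℛ k a).left i) * f ((ℛ k a).right i)
        = f (Coalgebra.counit (R := k) ((ℛ k a).left i) • (ℛ k a).right i) := by
    intro i _
    rw [map_smul, Algebra.smul_def]
    rfl
  rw [Finset.sum_congr rfl this, ← map_sum, repr_sum_counit_smul]

lemma conv_counit_right (f : A →ₗ[k] A) :
    conv f ((Algebra.linearMap k A) ∘ₗ Coalgebra.counit) = f := by
  ext a
  rw [conv_apply _ _ (ℛ k a)]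
  have : ∀ i ∈ (ℛ k a).index,
      f ((ℛ k a).left i) * (Algebra.linearMap k A ∘ₗ Coalgebra.counit) ((ℛ k a).right i)
        = f (Coalgebra.counit (R := k) ((ℛ k a).right i) • (ℛ k a).left i) := by
    intro i _
    rw [map_smul, Algebra.smul_def, mul_comm]
    rfl
  rw [Finset.sum_congr rfl this, ← map_sum, repr_sum_smul_counit]

lemma conv_assoc (f g h : A →ₗ[k] A) : conv (conv f g) h = conv f (conv g h) := by
  ext a
  rw [conv_apply (conv f g) h (ℛ k a), conv_apply f (conv g h) (ℛ k a)]
  set r := ℛ k a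
  calc ∑ i ∈ r.index, conv f g (r.left i) * h (r.right i)
      = ∑ i ∈ r.index, ∑ j ∈ (ℛ k (r.left i)).index,
          f ((ℛ k (r.left i)).left j) * ((g ((ℛ k (r.left i)).right j)) * h (r.right i)) := by
        refine Finset.sum_congr rfl fun i _ => ?_
        rw [conv_apply f g (ℛ k (r.left i)), Finset.sum_mul]
        exact Finset.sum_congr rfl fun j _ => mul_assoc _ _ _
    _ = ∑ i ∈ r.index, ∑ j ∈ (ℛ k (r.right i)).index,
          f (r.left i) * (g ((ℛ k (r.right i)).left j) * h ((ℛ k (r.right i)).right j)) := by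
        have key := Coalgebra.sum_tmul_tmul_eq r (fun i => ℛ k (r.left i))
          (fun i => ℛ k (r.right i))
        have key2 := congrArg
          (LinearMap.mul' k A ∘ₗ TensorProduct.map f (LinearMap.mul' k A ∘ₗ TensorProduct.map g h))
          key
        simpa [map_sum] using key2
    _ = ∑ i ∈ r.index, f (r.left i) * conv g h (r.right i) := by
        refine Finset.sum_congr rfl fun i _ => ?_
        rw [conv_apply g h (ℛ k (r.right i)), Finset.mul_sum]

lemma conv_antipode_id :
    conv (HopfAlgebra.antipode (R := k) (A := A)) LinearMap.id
      = (Algebra.linearMap k A) ∘ₗ Coalgebra.counit :=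
  HopfAlgebra.mul_antipode_rTensor_comul

lemma conv_id_antipode :
    conv LinearMap.id (HopfAlgebra.antipode (R := k) (A := A))
      = (Algebra.linearMap k A) ∘ₗ Coalgebra.counit :=
  HopfAlgebra.mul_antipode_lTensor_comul

lemma conv_id_conv_antipode (f : A →ₗ[k] A) :
    conv LinearMap.id (conv (HopfAlgebra.antipode (R := k)) f) = f := by
  rw [← conv_assoc, conv_id_antipode, conv_counit_left]

lemma conv_add_right (f g h : A →ₗ[k] A) : conv f (g + h) = conv f g + conv f h := by
  unfold conv
  rw [TensorProduct.map_add_right, LinearMap.add_comp, LinearMap.comp_add]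

lemma conv_zero_right (f : A →ₗ[k] A) : conv f 0 = 0 := by
  unfold conv
  rw [TensorProduct.map_zero_right, LinearMap.zero_comp, LinearMap.comp_zero]



/-- span of 1 and products of two augmentation-ideal elements -/
def Wsub (k A : Type*) [CommRing k] [CommRing A] [HopfAlgebra k A] : Submodule k A :=
  Submodule.span k ({(1 : A)} ∪ {x : A | ∃ a b : A,
    x = (a - algebraMap k A (Coalgebra.counit (R := k) a))
      * (b - algebraMap k A (Coalgebra.counit (R := k) b))})

lemma sub_mul_sub (a b : A) :
    (a - algebraMap k A (Coalgebra.counit (R := k) a))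
      * (b - algebraMap k A (Coalgebra.counit (R := k) b)) =
    a * b - Coalgebra.counit (R := k) a • b - Coalgebra.counit (R := k) b • a
      + (Coalgebra.counit (R := k) a * Coalgebra.counit (R := k) b) • (1 : A) := by
  simp only [Algebra.smul_def, map_mul, mul_one]
  ring

lemma Wsub_le_ker {M : Type*} [AddCommGroup M] [Module k M] (θ : A →ₗ[k] M)
    (h1 : θ 1 = 0)
    (hd : ∀ a b : A, θ (a * b)
      = Coalgebra.counit (R := k) a • θ b + Coalgebra.counit (R := k) b • θ a) :
    Wsub k A ≤ LinearMap.ker θ := by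
  rw [Wsub, Submodule.span_le]
  rintro x hx
  rcases hx with hx | ⟨a, b, rfl⟩
  · rw [Set.mem_singleton_iff] at hx
    subst hx
    simp [LinearMap.mem_ker, h1]
  · simp only [SetLike.mem_coe, LinearMap.mem_ker, sub_mul_sub, map_add, map_sub, map_smul,
      hd a b, h1, smul_zero, add_zero]
    abel

lemma pointDer_of_le_ker {M : Type*} [AddCommGroup M] [Module k M] (θ : A →ₗ[k] M)
    (h : Wsub k A ≤ LinearMap.ker θ) (a b : A) :
    θ (a * b) = Coalgebra.counit (R := k) a • θ b + Coalgebra.counit (R := k) b • θ a := by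
  have h1 : θ 1 = 0 := h (Submodule.subset_span (Or.inl rfl))
  have h2 : θ ((a - algebraMap k A (Coalgebra.counit (R := k) a))
      * (b - algebraMap k A (Coalgebra.counit (R := k) b))) = 0 :=
    h (Submodule.subset_span (Or.inr ⟨a, b, rfl⟩))
  rw [sub_mul_sub, map_add, map_sub, map_sub, map_smul, map_smul, map_smul, h1, smul_zero,
    add_zero] at h2
  rw [sub_sub, sub_eq_zero] at h2
  exact h2

/-- key coassociativity/antipode computation -/
lemma repr_antipode_aux {a : A} {ι κ : Type*} (r : Coalgebra.Repr k a ι) (t : ∀ i, Coalgebra.Repr k (r.right i) κ) :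
    ∑ i ∈ r.index, ∑ p ∈ (t i).index,
      (HopfAlgebra.antipode (R := k) (r.left i) * (t i).left p) ⊗ₜ[k] (t i).right p
      = (1 : A) ⊗ₜ[k] a := by
  have key := Coalgebra.sum_tmul_tmul_eq r (fun i => ℛ k (r.left i)) t
  have key2 := congrArg
    (LinearMap.rTensor A (LinearMap.mul' k A ∘ₗ
        TensorProduct.map (HopfAlgebra.antipode (R := k)) LinearMap.id) ∘ₗ
      (TensorProduct.assoc k A A A).symm.toLinearMap) key
  simp only [map_sum, LinearMap.comp_apply, LinearEquiv.coe_coe, TensorProduct.assoc_symm_tmul,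
    LinearMap.rTensor_tmul, TensorProduct.map_tmul, LinearMap.mul'_apply, LinearMap.id_coe,
    id_eq] at key2
  rw [← key2]
  calc ∑ i ∈ r.index, ∑ j ∈ (ℛ k (r.left i)).index,
        (HopfAlgebra.antipode (R := k) ((ℛ k (r.left i)).left j) * (ℛ k (r.left i)).right j)
          ⊗ₜ[k] r.right i
      = ∑ i ∈ r.index,
          (algebraMap k A (Coalgebra.counit (R := k) (r.left i))) ⊗ₜ[k] r.right i := by
        refine Finset.sum_congr rfl fun i _ => ?_
        rw [← TensorProduct.sum_tmul, HopfAlgebra.sum_antipode_mul_eq_algebraMap_counit]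
    _ = (1 : A) ⊗ₜ[k] a := by
        have h := congrArg (LinearMap.rTensor A (Algebra.linearMap k A))
          (Coalgebra.sum_counit_tmul_eq (R := k) r)
        simp only [map_sum, LinearMap.rTensor_tmul, Algebra.linearMap_apply, map_one] at h
        exact h

/-- an explicit representation of the comultiplication of a product -/
noncomputable def Coalgebra.Repr.mul {a b : A} {ι κ : Type*} (r : Coalgebra.Repr k a ι)
    (s : Coalgebra.Repr k b κ) : Coalgebra.Repr k (a * b) (ι × κ) where
  index := r.index ×ˢ s.index
  left := fun p => r.left p.1 * s.left p.2
  right := fun p => r.right p.1 * s.right p.2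
  eq := by
    rw [Finset.sum_product]
    rw [show Coalgebra.comul (R := k) (a * b) = Coalgebra.comul (R := k) a * Coalgebra.comul b
      from Bialgebra.comul_mul a b, ← r.eq, ← s.eq, Finset.sum_mul_sum]
    exact Finset.sum_congr rfl fun i _ => Finset.sum_congr rfl fun j _ =>
      (Algebra.TensorProduct.tmul_mul_tmul _ _ _ _).symm

lemma antipode_mul (a b : A) :
    HopfAlgebra.antipode (R := k) (a * b)
      = HopfAlgebra.antipode (R := k) a * HopfAlgebra.antipode (R := k) b := by
  classical
  set r := ℛ k a
  set s := ℛ k b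
  set t := fun i => ℛ k (r.right i)
  set u := fun j => ℛ k (s.right j)
  have ha := repr_antipode_aux r t
  have hb := repr_antipode_aux s u
  -- the bilinear map B x y = (multiplication in A ⊗ A, then x x' * S(y y'))
  set φ : A ⊗[k] A →ₗ[k] A := LinearMap.mul' k A ∘ₗ
    TensorProduct.map LinearMap.id (HopfAlgebra.antipode (R := k)) with hφ
  set B : A ⊗[k] A →ₗ[k] A ⊗[k] A →ₗ[k] A :=
    (LinearMap.mul k (A ⊗[k] A)).compr₂ φ with hB
  have hBapp : ∀ (x y x' y' : A), B (x ⊗ₜ[k] y) (x' ⊗ₜ[k] y')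
      = (x * x') * HopfAlgebra.antipode (R := k) (y * y') := by
    intro x y x' y'
    simp [hB, hφ, LinearMap.compr₂_apply, LinearMap.mul_apply',
      Algebra.TensorProduct.tmul_mul_tmul]
  have key := congrArg₂ (fun x y => B x y) ha hb
  simp only [map_sum, LinearMap.sum_apply, Finset.sum_apply] at key
  -- compute RHS of key
  have hrhs : B ((1 : A) ⊗ₜ[k] a) ((1 : A) ⊗ₜ[k] b)
      = HopfAlgebra.antipode (R := k) (a * b) := by
    rw [hBapp, one_mul, one_mul]
  rw [hrhs] at key
  rw [← key]
  -- now prove S a * S b equals the quadruple sum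
  have hSa : HopfAlgebra.antipode (R := k) a
      = ∑ i ∈ r.index, Coalgebra.counit (R := k) (r.right i)
          • HopfAlgebra.antipode (R := k) (r.left i) := by
    conv_lhs => rw [← repr_sum_smul_counit r]
    rw [map_sum]
    exact Finset.sum_congr rfl fun i _ => by rw [map_smul]
  have hSb : HopfAlgebra.antipode (R := k) b
      = ∑ j ∈ s.index, Coalgebra.counit (R := k) (s.right j)
          • HopfAlgebra.antipode (R := k) (s.left j) := by
    conv_lhs => rw [← repr_sum_smul_counit s]
    rw [map_sum]
    exact Finset.sum_congr rfl fun j _ => by rw [map_smul]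
  refine Eq.symm ?_
  calc HopfAlgebra.antipode (R := k) a * HopfAlgebra.antipode (R := k) b
      = (∑ j ∈ s.index, Coalgebra.counit (R := k) (s.right j)
          • HopfAlgebra.antipode (R := k) (s.left j))
        * (∑ i ∈ r.index, Coalgebra.counit (R := k) (r.right i)
          • HopfAlgebra.antipode (R := k) (r.left i)) := by
        rw [← hSa, ← hSb, mul_comm]
    _ = ∑ j ∈ s.index, ∑ i ∈ r.index,
          (HopfAlgebra.antipode (R := k) (s.left j) * HopfAlgebra.antipode (R := k) (r.left i))
            * algebraMap k A (Coalgebra.counit (R := k) (s.right j * r.right i)) := by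
        rw [Finset.sum_mul_sum]
        refine Finset.sum_congr rfl fun j _ => Finset.sum_congr rfl fun i _ => ?_
        rw [Bialgebra.counit_mul, map_mul, Algebra.smul_def, Algebra.smul_def]
        ring
    _ = ∑ j ∈ s.index, ∑ i ∈ r.index,
          (HopfAlgebra.antipode (R := k) (s.left j) * HopfAlgebra.antipode (R := k) (r.left i))
            * (∑ q ∈ (u j).index, ∑ p ∈ (t i).index,
                ((u j).left q * (t i).left p)
                  * HopfAlgebra.antipode (R := k) ((u j).right q * (t i).right p)) := by
        refine Finset.sum_congr rfl fun j _ => Finset.sum_congr rfl fun i _ => ?_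
        congr 1
        rw [← HopfAlgebra.sum_mul_antipode_eq_algebraMap_counit (Coalgebra.Repr.mul (u j) (t i)),
          ← Finset.sum_product']
        rfl
    _ = ∑ j ∈ s.index, ∑ i ∈ r.index, ∑ q ∈ (u j).index, ∑ p ∈ (t i).index,
          (B ((HopfAlgebra.antipode (R := k) (r.left i) * (t i).left p) ⊗ₜ[k] (t i).right p))
            ((HopfAlgebra.antipode (R := k) (s.left j) * (u j).left q) ⊗ₜ[k] (u j).right q) := by
        refine Finset.sum_congr rfl fun j _ => Finset.sum_congr rfl fun i _ => ?_
        rw [Finset.mul_sum]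
        refine Finset.sum_congr rfl fun q _ => ?_
        rw [Finset.mul_sum]
        refine Finset.sum_congr rfl fun p _ => ?_
        rw [hBapp, mul_comm ((u j).right q) ((t i).right p)]
        ring
    _ = ∑ j ∈ s.index, ∑ q ∈ (u j).index, ∑ i ∈ r.index, ∑ p ∈ (t i).index,
          (B ((HopfAlgebra.antipode (R := k) (r.left i) * (t i).left p) ⊗ₜ[k] (t i).right p))
            ((HopfAlgebra.antipode (R := k) (s.left j) * (u j).left q) ⊗ₜ[k] (u j).right q) := by
        exact Finset.sum_congr rfl fun j _ => Finset.sum_comm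


lemma conv_one (f g : A →ₗ[k] A) : conv f g (1 : A) = f 1 * g 1 := by
  rw [show (conv f g) (1:A) = (LinearMap.mul' k A) (TensorProduct.map f g
    (Coalgebra.comul (R := k) (1 : A))) from rfl, Bialgebra.comul_one,
    Algebra.TensorProduct.one_def, TensorProduct.map_tmul, LinearMap.mul'_apply]

/-- S ⋆ D is an `ε`-point-derivation when D is a derivation. -/
lemma conv_antipode_der_pointwise (D : Derivation k A A) (a b : A) :
    conv (HopfAlgebra.antipode (R := k)) D.toLinearMap (a * b)
      = Coalgebra.counit (R := k) a • conv (HopfAlgebra.antipode (R := k)) D.toLinearMap b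
        + Coalgebra.counit (R := k) b • conv (HopfAlgebra.antipode (R := k)) D.toLinearMap a := by
  set r := ℛ k a
  set s := ℛ k b
  rw [conv_apply _ _ (Coalgebra.Repr.mul r s), conv_apply _ _ r, conv_apply _ _ s]
  rw [show (∑ i ∈ (Coalgebra.Repr.mul r s).index, HopfAlgebra.antipode (R := k) ((Coalgebra.Repr.mul r s).left i)
      * D.toLinearMap ((Coalgebra.Repr.mul r s).right i))
    = ∑ p ∈ r.index ×ˢ s.index, HopfAlgebra.antipode (R := k) (r.left p.1 * s.left p.2)
      * D.toLinearMap (r.right p.1 * s.right p.2) from rfl, Finset.sum_product]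
  calc ∑ i ∈ r.index, ∑ j ∈ s.index,
        HopfAlgebra.antipode (R := k) (r.left i * s.left j)
          * D.toLinearMap (r.right i * s.right j)
      = ∑ i ∈ r.index, ∑ j ∈ s.index,
          ((HopfAlgebra.antipode (R := k) (r.left i) * r.right i)
              * (HopfAlgebra.antipode (R := k) (s.left j) * D (s.right j))
            + (HopfAlgebra.antipode (R := k) (s.left j) * s.right j)
              * (HopfAlgebra.antipode (R := k) (r.left i) * D (r.right i))) := by
        refine Finset.sum_congr rfl fun i _ => Finset.sum_congr rfl fun j _ => ?_
        show HopfAlgebra.antipode (R := k) (r.left i * s.left j)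
            * D (r.right i * s.right j) = _
        rw [antipode_mul (r.left i), Derivation.leibniz, smul_eq_mul, smul_eq_mul]
        ring
    _ = (∑ i ∈ r.index, HopfAlgebra.antipode (R := k) (r.left i) * r.right i)
          * (∑ j ∈ s.index, HopfAlgebra.antipode (R := k) (s.left j) * D (s.right j))
        + (∑ j ∈ s.index, HopfAlgebra.antipode (R := k) (s.left j) * s.right j)
          * (∑ i ∈ r.index, HopfAlgebra.antipode (R := k) (r.left i) * D (r.right i)) := by
        rw [Finset.sum_mul_sum]
        rw [show (∑ j ∈ s.index, HopfAlgebra.antipode (R := k) (s.left j) * s.right j)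
          * (∑ i ∈ r.index, HopfAlgebra.antipode (R := k) (r.left i) * D (r.right i))
          = ∑ i ∈ r.index, ∑ j ∈ s.index,
            (HopfAlgebra.antipode (R := k) (s.left j) * s.right j)
              * (HopfAlgebra.antipode (R := k) (r.left i) * D (r.right i)) from by
          rw [Finset.sum_mul_sum]; exact Finset.sum_comm]
        rw [← Finset.sum_add_distrib]
        exact Finset.sum_congr rfl fun i _ => Finset.sum_add_distrib
    _ = _ := by
        rw [HopfAlgebra.sum_antipode_mul_eq_algebraMap_counit r, HopfAlgebra.sum_antipode_mul_eq_algebraMap_counit s]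
        rw [Algebra.smul_def, Algebra.smul_def]
        rfl

/-- id ⋆ θ satisfies the Leibniz rule when θ is an `ε`-point-derivation. -/
lemma conv_id_leibniz (θ : A →ₗ[k] A)
    (hθ : ∀ a b : A, θ (a * b)
      = Coalgebra.counit (R := k) a • θ b + Coalgebra.counit (R := k) b • θ a) (a b : A) :
    conv LinearMap.id θ (a * b)
      = a * conv LinearMap.id θ b + b * conv LinearMap.id θ a := by
  set r := ℛ k a
  set s := ℛ k b
  rw [conv_apply _ _ (Coalgebra.Repr.mul r s), conv_apply _ _ r, conv_apply _ _ s]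
  rw [show (∑ i ∈ (Coalgebra.Repr.mul r s).index, LinearMap.id ((Coalgebra.Repr.mul r s).left i)
      * θ ((Coalgebra.Repr.mul r s).right i))
    = ∑ p ∈ r.index ×ˢ s.index, (r.left p.1 * s.left p.2)
      * θ (r.right p.1 * s.right p.2) from rfl, Finset.sum_product]
  calc ∑ i ∈ r.index, ∑ j ∈ s.index,
        (r.left i * s.left j) * θ (r.right i * s.right j)
      = ∑ i ∈ r.index, ∑ j ∈ s.index,
          ((Coalgebra.counit (R := k) (r.right i) • r.left i) * (s.left j * θ (s.right j))
            + (Coalgebra.counit (R := k) (s.right j) • s.left j) * (r.left i * θ (r.right i))) := by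
        refine Finset.sum_congr rfl fun i _ => Finset.sum_congr rfl fun j _ => ?_
        rw [hθ, Algebra.smul_def, Algebra.smul_def, Algebra.smul_def, Algebra.smul_def]
        ring
    _ = (∑ i ∈ r.index, Coalgebra.counit (R := k) (r.right i) • r.left i)
          * (∑ j ∈ s.index, s.left j * θ (s.right j))
        + (∑ j ∈ s.index, Coalgebra.counit (R := k) (s.right j) • s.left j)
          * (∑ i ∈ r.index, r.left i * θ (r.right i)) := by
        rw [Finset.sum_mul_sum]
        rw [show (∑ j ∈ s.index, Coalgebra.counit (R := k) (s.right j) • s.left j)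
          * (∑ i ∈ r.index, r.left i * θ (r.right i))
          = ∑ i ∈ r.index, ∑ j ∈ s.index,
            (Coalgebra.counit (R := k) (s.right j) • s.left j)
              * (r.left i * θ (r.right i)) from by
          rw [Finset.sum_mul_sum]; exact Finset.sum_comm]
        rw [← Finset.sum_add_distrib]
        exact Finset.sum_congr rfl fun i _ => Finset.sum_add_distrib
    _ = _ := by
        rw [repr_sum_smul_counit r, repr_sum_smul_counit s]
        rfl

/-- the left-invariant derivation attached to an `ε`-point functional. -/
noncomputable def mkInvDer (c : A →ₗ[k] k)
    (hc : ∀ a b : A, c (a * b)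
      = Coalgebra.counit (R := k) a • c b + Coalgebra.counit (R := k) b • c a) :
    Derivation k A A where
  toLinearMap := conv LinearMap.id ((Algebra.linearMap k A) ∘ₗ c)
  map_one_eq_zero' := by
    have hc1 : c 1 = 0 := by
      have := hc 1 1
      simp only [mul_one, Bialgebra.counit_one, one_smul] at this
      have h0 : c 1 + c 1 = c 1 + 0 := by rw [add_zero]; exact this.symm
      exact add_left_cancel h0
    rw [show (conv LinearMap.id ((Algebra.linearMap k A) ∘ₗ c) : A →ₗ[k] A) 1
      = LinearMap.id (1:A) * ((Algebra.linearMap k A) ∘ₗ c) (1:A) from conv_one _ _]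
    simp [hc1]
  leibniz' a b := by
    have hθ : ∀ a b : A, ((Algebra.linearMap k A) ∘ₗ c) (a * b)
        = Coalgebra.counit (R := k) a • ((Algebra.linearMap k A) ∘ₗ c) b
          + Coalgebra.counit (R := k) b • ((Algebra.linearMap k A) ∘ₗ c) a := by
      intro a b
      simp only [LinearMap.comp_apply, Algebra.linearMap_apply, hc a b, map_add]
      rw [smul_eq_mul, smul_eq_mul, map_mul, map_mul, ← Algebra.smul_def, ← Algebra.smul_def]
    have := conv_id_leibniz ((Algebra.linearMap k A) ∘ₗ c) hθ a b
    simpa [smul_eq_mul] using this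


lemma conv_id_scalar_apply (c : A →ₗ[k] k) {x : A} {ι : Type*} (r : Coalgebra.Repr k x ι) :
    conv LinearMap.id ((Algebra.linearMap k A) ∘ₗ c) x
      = ∑ i ∈ r.index, c (r.right i) • r.left i := by
  rw [conv_apply _ _ r]
  refine Finset.sum_congr rfl fun i _ => ?_
  rw [LinearMap.id_coe, id_eq, LinearMap.comp_apply, Algebra.linearMap_apply, mul_comm,
    ← Algebra.smul_def]

/-- `id ⋆ (ι ∘ c)` is left-invariant. -/
lemma conv_id_scalar_invariant (c : A →ₗ[k] k) :
    Coalgebra.comul (R := k) ∘ₗ conv LinearMap.id ((Algebra.linearMap k A) ∘ₗ c)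
      = (TensorProduct.map LinearMap.id (conv LinearMap.id ((Algebra.linearMap k A) ∘ₗ c)))
          ∘ₗ Coalgebra.comul := by
  ext a
  set r := ℛ k a
  set θ := conv LinearMap.id ((Algebra.linearMap k A) ∘ₗ c) with hθ
  have key := Coalgebra.sum_tmul_tmul_eq r (fun i => ℛ k (r.left i)) (fun i => ℛ k (r.right i))
  have key2 := congrArg (LinearMap.lTensor A
    ((TensorProduct.rid k A).toLinearMap ∘ₗ LinearMap.lTensor A c)) key
  simp only [map_sum, LinearMap.lTensor_tmul, LinearMap.comp_apply, LinearEquiv.coe_coe,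
    TensorProduct.rid_tmul] at key2
  -- key2 : ∑ i ∑ j, (vl i).left j ⊗ₜ (c (r.right i) • (vl i).right j)
  --      = ∑ i ∑ p, r.left i ⊗ₜ (c ((vr i).right p) • (vr i).left p)
  calc Coalgebra.comul (R := k) (θ a)
      = ∑ i ∈ r.index, ∑ j ∈ (ℛ k (r.left i)).index,
          (ℛ k (r.left i)).left j ⊗ₜ[k]
            (c (r.right i) • (ℛ k (r.left i)).right j) := by
        rw [conv_id_scalar_apply c r, map_sum]
        refine Finset.sum_congr rfl fun i _ => ?_
        rw [map_smul, ← (ℛ k (r.left i)).eq, Finset.smul_sum]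
        exact Finset.sum_congr rfl fun j _ => (TensorProduct.tmul_smul _ _ _).symm
    _ = ∑ i ∈ r.index, ∑ p ∈ (ℛ k (r.right i)).index,
          r.left i ⊗ₜ[k] (c ((ℛ k (r.right i)).right p) • (ℛ k (r.right i)).left p) := key2
    _ = (TensorProduct.map LinearMap.id θ) (Coalgebra.comul (R := k) a) := by
        rw [← r.eq, map_sum]
        refine Finset.sum_congr rfl fun i _ => ?_
        rw [TensorProduct.map_tmul, LinearMap.id_coe, id_eq, ← TensorProduct.tmul_sum,
          hθ, conv_id_scalar_apply c (ℛ k (r.right i))]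

lemma counit_conv_id_scalar (c : A →ₗ[k] k) (a : A) :
    Coalgebra.counit (R := k) (conv LinearMap.id ((Algebra.linearMap k A) ∘ₗ c) a) = c a := by
  set r := ℛ k a
  have h := congrArg c (repr_sum_counit_smul r)
  rw [map_sum] at h
  rw [conv_id_scalar_apply c r, map_sum, ← h]
  refine Finset.sum_congr rfl fun i _ => ?_
  rw [map_smul, map_smul, smul_eq_mul, smul_eq_mul, mul_comm]

/-- The key evaluation: `S ⋆ (f • η) = a ↦ ε(η a) • f` for left-invariant `η`. -/
lemma conv_antipode_smul_invariant (f : A) (η : Derivation k A A)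
    (hη : Coalgebra.comul (R := k) ∘ₗ η.toLinearMap
      = (TensorProduct.map LinearMap.id η.toLinearMap) ∘ₗ Coalgebra.comul) (a : A) :
    conv (HopfAlgebra.antipode (R := k)) (f • η : Derivation k A A).toLinearMap a
      = Coalgebra.counit (R := k) (η a) • f := by
  have h5 : conv (HopfAlgebra.antipode (R := k)) η.toLinearMap
      = (Algebra.linearMap k A) ∘ₗ Coalgebra.counit ∘ₗ η.toLinearMap := by
    unfold conv
    rw [show TensorProduct.map (HopfAlgebra.antipode (R := k) (A := A)) η.toLinearMap
        = TensorProduct.map (HopfAlgebra.antipode (R := k)) LinearMap.id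
            ∘ₗ TensorProduct.map LinearMap.id η.toLinearMap from by
      rw [← TensorProduct.map_comp, LinearMap.comp_id, LinearMap.id_comp]]
    rw [LinearMap.comp_assoc, ← hη]
    rw [show (LinearMap.mul' k A ∘ₗ (TensorProduct.map (HopfAlgebra.antipode (R := k))
        LinearMap.id ∘ₗ (Coalgebra.comul ∘ₗ η.toLinearMap)))
      = (LinearMap.mul' k A ∘ₗ TensorProduct.map (HopfAlgebra.antipode (R := k))
          LinearMap.id ∘ₗ Coalgebra.comul) ∘ₗ η.toLinearMap from by
      rw [LinearMap.comp_assoc, LinearMap.comp_assoc]]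
    rw [show LinearMap.mul' k A ∘ₗ TensorProduct.map (HopfAlgebra.antipode (R := k))
        LinearMap.id ∘ₗ Coalgebra.comul = (Algebra.linearMap k A) ∘ₗ Coalgebra.counit from
      HopfAlgebra.mul_antipode_rTensor_comul]
    rw [LinearMap.comp_assoc]
  set r := ℛ k a
  rw [conv_apply _ _ r]
  have hsmul : ∀ x : A, (f • η : Derivation k A A).toLinearMap x = f * η x := fun x => by
    rw [show (f • η : Derivation k A A).toLinearMap x = (f • η : Derivation k A A) x from rfl,
      Derivation.smul_apply, smul_eq_mul]
  calc ∑ i ∈ r.index, HopfAlgebra.antipode (R := k) (r.left i)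
        * (f • η : Derivation k A A).toLinearMap (r.right i)
      = f * ∑ i ∈ r.index, HopfAlgebra.antipode (R := k) (r.left i) * η.toLinearMap (r.right i) := by
        rw [Finset.mul_sum]
        refine Finset.sum_congr rfl fun i _ => ?_
        rw [hsmul, show η.toLinearMap (r.right i) = η (r.right i) from rfl]
        ring
    _ = f * conv (HopfAlgebra.antipode (R := k)) η.toLinearMap a := by rw [conv_apply _ _ r]
    _ = Coalgebra.counit (R := k) (η a) • f := by
        rw [h5]
        simp only [LinearMap.comp_apply, Algebra.linearMap_apply]
        rw [mul_comm, ← Algebra.smul_def]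
        rfl


lemma conv_antipode_coe_add (D E : Derivation k A A) (a : A) :
    conv (HopfAlgebra.antipode (R := k)) ((D + E : Derivation k A A) : A →ₗ[k] A) a
      = conv (HopfAlgebra.antipode (R := k)) (D : A →ₗ[k] A) a
        + conv (HopfAlgebra.antipode (R := k)) (E : A →ₗ[k] A) a := by
  rw [show ((D + E : Derivation k A A) : A →ₗ[k] A)
    = ((D : A →ₗ[k] A) + (E : A →ₗ[k] A)) from rfl, conv_add_right, LinearMap.add_apply]

lemma conv_smul_right (c : k) (f g : A →ₗ[k] A) : conv f (c • g) = c • conv f g := by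
  unfold conv
  rw [TensorProduct.map_smul_right, LinearMap.smul_comp, LinearMap.comp_smul]

/-- An extensionality helper. -/
lemma derext (D E : Derivation k A A) (h : D.toLinearMap = E.toLinearMap) : D = E := by
  ext a
  exact congrArg (fun (g : A →ₗ[k] A) => g a) h

lemma mkQ_pointDer (a b : A) :
    (Wsub k A).mkQ (a * b) = Coalgebra.counit (R := k) a • (Wsub k A).mkQ b
      + Coalgebra.counit (R := k) b • (Wsub k A).mkQ a :=
  pointDer_of_le_ker ((Wsub k A).mkQ) (le_of_eq (Submodule.ker_mkQ (Wsub k A)).symm) a b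

lemma finite_quotient (k A : Type*) [CommRing k] [CommRing A] [HopfAlgebra k A]
    [Algebra.FiniteType k A] : Module.Finite k (A ⧸ Wsub k A) := by
  classical
  obtain ⟨s, hs⟩ := (inferInstance : Algebra.FiniteType k A).out
  refine Module.Finite.of_fg_top ⟨(insert (1 : A) s).image (Wsub k A).mkQ, ?_⟩
  rw [Finset.coe_image, eq_top_iff]
  rintro x -
  obtain ⟨a, rfl⟩ := (Wsub k A).mkQ_surjective x
  have ha : a ∈ Algebra.adjoin k (↑s : Set A) := by rw [hs]; trivial
  refine Algebra.adjoin_induction ?_ ?_ ?_ ?_ ha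
  · intro y hy
    exact Submodule.subset_span ⟨y, by simp [hy], rfl⟩
  · intro r
    have h1 : (Wsub k A).mkQ (algebraMap k A r) = r • (Wsub k A).mkQ 1 := by
      rw [← map_smul, Algebra.algebraMap_eq_smul_one]
    rw [h1]
    exact Submodule.smul_mem _ _ (Submodule.subset_span ⟨1, by simp, rfl⟩)
  · intro x y _ _ hx hy
    rw [map_add]
    exact Submodule.add_mem _ hx hy
  · intro x y _ _ hx hy
    rw [mkQ_pointDer x y]
    exact Submodule.add_mem _ (Submodule.smul_mem _ _ hy) (Submodule.smul_mem _ _ hx)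

end LIP

set_option maxHeartbeats 2000000 in
set_option synthInstance.maxHeartbeats 400000 in
/-- The Lie algebra of vector fields on a linear algebraic group is a free module over the
coordinate ring, generated by the left-invariant vector fields: the evaluation map
`A ⊗ₖ L → Der_k(A)`, `f ⊗ η ↦ f·η`, is bijective. -/
theorem derivations_free_over_left_invariant
    (k : Type*) [Field k] [IsAlgClosed k] [CharZero k]
    (A : Type*) [CommRing A] [HopfAlgebra k A] [Algebra.FiniteType k A] :
    Function.Bijective (leftInvariantEval k A) := by
  classical
  set W := LIP.Wsub k A with hWdef
  letI : Module.Finite k (A ⧸ W) := LIP.finite_quotient k A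
  set evalL := leftInvariantEval k A with hevalL
  -- the linear functional attached to a left-invariant derivation
  have hkillsL : ∀ η : Derivation k A A,
      W ≤ LinearMap.ker (Coalgebra.counit (R := k) ∘ₗ η.toLinearMap) := by
    intro η
    refine LIP.Wsub_le_ker _ ?_ ?_
    · have : η.toLinearMap 1 = 0 := η.map_one_eq_zero
      simp [this]
    · intro a b
      simp only [LinearMap.comp_apply]
      rw [show η.toLinearMap (a * b) = η (a * b) from rfl, Derivation.leibniz,
        smul_eq_mul, smul_eq_mul, map_add, Bialgebra.counit_mul, Bialgebra.counit_mul,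
        smul_eq_mul, smul_eq_mul]
      rfl
  let ρ : ↥(leftInvariantDerivations k A) →ₗ[k] Module.Dual k (A ⧸ W) :=
    { toFun := fun η =>
        W.liftQ (Coalgebra.counit (R := k) ∘ₗ (η : Derivation k A A).toLinearMap) (hkillsL _)
      map_add' := fun η η' => by
        refine Submodule.linearMap_qext _ ?_
        rw [LinearMap.add_comp, Submodule.liftQ_mkQ, Submodule.liftQ_mkQ, Submodule.liftQ_mkQ]
        ext a
        simp
      map_smul' := fun c η => by
        refine Submodule.linearMap_qext _ ?_
        rw [RingHom.id_apply, LinearMap.smul_comp, Submodule.liftQ_mkQ, Submodule.liftQ_mkQ]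
        ext a
        simp }
  have hρ_apply : ∀ (η : ↥(leftInvariantDerivations k A)) (a : A),
      ρ η (W.mkQ a) = Coalgebra.counit (R := k) ((η : Derivation k A A) a) :=
    fun η a => Submodule.liftQ_apply _ _ _
  -- conv with the antipode determines a left-invariant derivation:
  have hS : ∀ η : ↥(leftInvariantDerivations k A),
      LIP.conv (HopfAlgebra.antipode (R := k)) (η : Derivation k A A).toLinearMap
        = (Algebra.linearMap k A) ∘ₗ Coalgebra.counit (R := k)
            ∘ₗ (η : Derivation k A A).toLinearMap := by
    intro η
    have h5 := LIP.conv_antipode_smul_invariant (1 : A) (η : Derivation k A A) η.2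
    ext a
    have := h5 a
    rw [show ((1 : A) • (η : Derivation k A A) : Derivation k A A).toLinearMap
      = (η : Derivation k A A).toLinearMap from by rw [one_smul]] at this
    rw [this]
    simp [Algebra.smul_def]
  have hρinj : Function.Injective ρ := by
    intro η η' hee
    have h1 : Coalgebra.counit (R := k) ∘ₗ (η : Derivation k A A).toLinearMap
        = Coalgebra.counit (R := k) ∘ₗ (η' : Derivation k A A).toLinearMap := by
      have h2 := congrArg (fun (g : Module.Dual k (A ⧸ W)) => g ∘ₗ W.mkQ) hee
      exact h2
    have h3 : (η : Derivation k A A).toLinearMap = (η' : Derivation k A A).toLinearMap := by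
      rw [← LIP.conv_id_conv_antipode (η : Derivation k A A).toLinearMap, hS η, h1, ← hS η',
        LIP.conv_id_conv_antipode]
    exact Subtype.ext (LIP.derext _ _ h3)
  have hval : ∀ (f : A) (η : ↥(leftInvariantDerivations k A)),
      evalL (f ⊗ₜ[k] η) = f • (η : Derivation k A A) := fun f η => rfl
  -- the bridge between the dual-tensor picture and convolution with the antipode
  have hbridge : ∀ (t : A ⊗[k] ↥(leftInvariantDerivations k A)) (a : A),
      dualTensorHom k (A ⧸ W) A ((TensorProduct.comm k A _) ((LinearMap.lTensor A ρ) t)) (W.mkQ a)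
        = LIP.conv (HopfAlgebra.antipode (R := k)) (evalL t).toLinearMap a := by
    intro t
    induction t using TensorProduct.induction_on with
    | zero =>
      intro a
      simp only [map_zero]
      rw [show (0 : Derivation k A A).toLinearMap = 0 from rfl, LIP.conv_zero_right]
      rfl
    | tmul f η =>
      intro a
      rw [LinearMap.lTensor_tmul, TensorProduct.comm_tmul, dualTensorHom_apply, hval,
        LIP.conv_antipode_smul_invariant f (η : Derivation k A A) η.2 a, hρ_apply]
    | add u v hu hv =>
      intro a
      simp only [map_add]
      rw [LinearMap.add_apply, hu a, hv a, LIP.conv_antipode_coe_add]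
  have hdth_inj : Function.Injective (dualTensorHom k (A ⧸ W) A) := by
    intro x y hxy
    rw [← dualTensorHomEquivOfBasis_symm_cancel_left (Module.Free.chooseBasis k (A ⧸ W)) x,
      ← dualTensorHomEquivOfBasis_symm_cancel_left (Module.Free.chooseBasis k (A ⧸ W)) y, hxy]
  constructor
  · -- injectivity
    have hker : ∀ t, evalL t = 0 → t = 0 := by
      intro t ht
      have hzero : dualTensorHom k (A ⧸ W) A ((TensorProduct.comm k A _)
          ((LinearMap.lTensor A ρ) t)) = 0 := by
        refine Submodule.linearMap_qext _ ?_
        ext a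
        rw [LinearMap.comp_apply, Submodule.mkQ_apply,
          show Submodule.Quotient.mk a = W.mkQ a from rfl, hbridge t a, ht,
          show (0 : Derivation k A A).toLinearMap = 0 from rfl, LIP.conv_zero_right]
        rfl
      have h2 : (LinearMap.lTensor A ρ) t = 0 := by
        apply (TensorProduct.comm k A (Module.Dual k (A ⧸ W))).injective
        apply hdth_inj
        rw [hzero, map_zero, map_zero]
      obtain ⟨g, hg⟩ := ρ.exists_leftInverse_of_injective (LinearMap.ker_eq_bot.mpr hρinj)
      have h3 : t = (LinearMap.lTensor A g) ((LinearMap.lTensor A ρ) t) := by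
        rw [← LinearMap.comp_apply, ← LinearMap.lTensor_comp, hg, LinearMap.lTensor_id,
          LinearMap.id_apply]
      rw [h3, h2, map_zero]
    intro x y hxy
    have hsub := hker (x - y) (by rw [map_sub, hxy, sub_self])
    exact sub_eq_zero.mp hsub
  · -- surjectivity
    intro D
    have hkills : W ≤ LinearMap.ker
        (LIP.conv (HopfAlgebra.antipode (R := k)) D.toLinearMap) := by
      refine LIP.Wsub_le_ker _ ?_ (LIP.conv_antipode_der_pointwise D)
      rw [LIP.conv_one, show D.toLinearMap 1 = 0 from D.map_one_eq_zero, mul_zero]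
    set g : (A ⧸ W) →ₗ[k] A := W.liftQ _ hkills with hgdef
    set u := (dualTensorHomEquiv k (A ⧸ W) A).symm g with hudef
    have hgu : dualTensorHom k (A ⧸ W) A u = g :=
      (dualTensorHomEquiv k (A ⧸ W) A).apply_symm_apply g
    have hcprop : ∀ δ : Module.Dual k (A ⧸ W), ∀ a b : A,
        (δ ∘ₗ W.mkQ) (a * b) = Coalgebra.counit (R := k) a • (δ ∘ₗ W.mkQ) b
          + Coalgebra.counit (R := k) b • (δ ∘ₗ W.mkQ) a := by
      intro δ a b
      rw [LinearMap.comp_apply, LIP.mkQ_pointDer a b, map_add, map_smul, map_smul]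
      rfl
    let ηm : Module.Dual k (A ⧸ W) →ₗ[k] ↥(leftInvariantDerivations k A) :=
      { toFun := fun δ => ⟨LIP.mkInvDer (δ ∘ₗ W.mkQ) (hcprop δ),
          LIP.conv_id_scalar_invariant (δ ∘ₗ W.mkQ)⟩
        map_add' := fun δ δ' => by
          refine Subtype.ext (LIP.derext _ _ ?_)
          show LIP.conv LinearMap.id ((Algebra.linearMap k A) ∘ₗ ((δ + δ') ∘ₗ W.mkQ)) = _
          rw [LinearMap.add_comp, LinearMap.comp_add, LIP.conv_add_right]
          rfl
        map_smul' := fun c δ => by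
          refine Subtype.ext (LIP.derext _ _ ?_)
          show LIP.conv LinearMap.id ((Algebra.linearMap k A) ∘ₗ ((c • δ) ∘ₗ W.mkQ)) = _
          rw [LinearMap.smul_comp, LinearMap.comp_smul, LIP.conv_smul_right]
          rfl }
    have hinv : ∀ (u' : Module.Dual k (A ⧸ W) ⊗[k] A) (a : A),
        LIP.conv (HopfAlgebra.antipode (R := k))
          (evalL ((LinearMap.lTensor A ηm)
            ((TensorProduct.comm k (Module.Dual k (A ⧸ W)) A) u'))).toLinearMap a
          = dualTensorHom k (A ⧸ W) A u' (W.mkQ a) := by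
      intro u'
      induction u' using TensorProduct.induction_on with
      | zero =>
        intro a
        simp only [map_zero]
        rw [show (0 : Derivation k A A).toLinearMap = 0 from rfl, LIP.conv_zero_right]
        rfl
      | tmul δ f =>
        intro a
        rw [TensorProduct.comm_tmul, LinearMap.lTensor_tmul, hval, dualTensorHom_apply,
          LIP.conv_antipode_smul_invariant f _ (LIP.conv_id_scalar_invariant (δ ∘ₗ W.mkQ)) a]
        rw [show ((ηm δ : ↥(leftInvariantDerivations k A)) : Derivation k A A) a
          = LIP.conv LinearMap.id ((Algebra.linearMap k A) ∘ₗ (δ ∘ₗ W.mkQ)) a from rfl]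
        rw [LIP.counit_conv_id_scalar]
        rfl
      | add x y hx hy =>
        intro a
        simp only [map_add]
        rw [LIP.conv_antipode_coe_add, hx a, hy a, LinearMap.add_apply]
    set t := (LinearMap.lTensor A ηm) ((TensorProduct.comm k (Module.Dual k (A ⧸ W)) A) u)
      with htdef
    refine ⟨t, ?_⟩
    have h1 : LIP.conv (HopfAlgebra.antipode (R := k)) (evalL t).toLinearMap
        = LIP.conv (HopfAlgebra.antipode (R := k)) D.toLinearMap := by
      ext a
      rw [htdef, hinv u a, hgu, hgdef, Submodule.mkQ_apply, Submodule.liftQ_apply]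
    have h2 : (evalL t).toLinearMap = D.toLinearMap := by
      rw [← LIP.conv_id_conv_antipode (evalL t).toLinearMap, h1, LIP.conv_id_conv_antipode]
    exact LIP.derext _ _ h2
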